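/- Assume G has at least one edge and 0 ≤ p ≤ 1. The polynomials D_2(t) = Σ_{wedges {e,f}} t_e·t_f and T_2(t) = Σ_{triangles {e,f,g}} (t_e·t_f + t_f·t_g + t_g·t_e) in the variables (t_e)_{e∈E} are each totally positive; moreover, when the variables are evaluated at independent Bernoulli(p) random variables, E_{≥1}[D_2] ≤ max{p·β, 1} and E_{≥1}[T_2] ≤ max{2p·Δ, 1}. -/

import Mathlib

open Finset MvPolynomial

noncomputable section
open scoped Classical

namespace ThreeProfile

variable {V : Type*}

/-- Edges of an edge set `F` whose endpoints both lie in the vertex set `s`. -/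
def edgesIn (F : Finset (Sym2 V)) (s : Finset V) : Finset (Sym2 V) :=
  F.filter (fun e => ∀ x ∈ e, x ∈ s)

/-- All 3-element subsets of the vertex set. -/
def triples (V : Type*) [Fintype V] : Finset (Finset V) :=
  (Finset.univ : Finset V).powersetCard 3

/-- 3-subsets of `V` inducing exactly `i` edges of `G`. -/
def triplesWith [Fintype V] (G : SimpleGraph V) (i : ℕ) : Finset (Finset V) :=
  (triples V).filter (fun s => (edgesIn G.edgeFinset s).card = i)

/-- A polynomial (in variables indexed by `Sym2 V`) is totally positive if all of its
monomial coefficients are nonnegative. -/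
def TotallyPositive (f : MvPolynomial (Sym2 V) ℝ) : Prop :=
  ∀ m : Sym2 V →₀ ℕ, 0 ≤ f.coeff m

/-- Iterated partial derivative `∂^a f` for a multi-index `a`. -/
def iterDeriv (a : Sym2 V →₀ ℕ) (f : MvPolynomial (Sym2 V) ℝ) :
    MvPolynomial (Sym2 V) ℝ :=
  a.support.toList.foldr (fun i g => (fun h => MvPolynomial.pderiv i h)^[a i] g) f

/-- Expectation of a polynomial when the variables are evaluated at independent
Bernoulli(`q`) random variables. -/
def bernoulliExp [Fintype V] (q : ℝ) (f : MvPolynomial (Sym2 V) ℝ) : ℝ :=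
  ∑ S ∈ (Finset.univ : Finset (Sym2 V)).powerset,
    q ^ S.card * (1 - q) ^ (Fintype.card (Sym2 V) - S.card) *
      MvPolynomial.eval (fun e => if e ∈ S then (1 : ℝ) else 0) f

/-- Number of 3-subsets inducing in `G` exactly two edges, one of which is `e`. -/
def betaE [Fintype V] (G : SimpleGraph V) (e : Sym2 V) : ℕ :=
  ((triples V).filter
    (fun s => (edgesIn G.edgeFinset s).card = 2 ∧ e ∈ edgesIn G.edgeFinset s)).card

/-- Number of triangles of `G` containing the edge `e`. -/
def deltaE [Fintype V] (G : SimpleGraph V) (e : Sym2 V) : ℕ :=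
  ((triples V).filter
    (fun s => (edgesIn G.edgeFinset s).card = 3 ∧ e ∈ edgesIn G.edgeFinset s)).card

/-- The polynomial `D₂(t) = Σ_{wedges {e,f}} t_e t_f`. -/
def D2poly [Fintype V] (G : SimpleGraph V) : MvPolynomial (Sym2 V) ℝ :=
  ∑ s ∈ triplesWith G 2, ∏ e ∈ edgesIn G.edgeFinset s, X e

/-- The polynomial `T₂(t) = Σ_{triangles {e,f,g}} (t_e t_f + t_f t_g + t_g t_e)`. -/
def T2poly [Fintype V] (G : SimpleGraph V) : MvPolynomial (Sym2 V) ℝ :=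
  ∑ s ∈ triplesWith G 3, ∑ pr ∈ (edgesIn G.edgeFinset s).powersetCard 2, ∏ e ∈ pr, X e

/-! ### Auxiliary lemmas -/

section GenericPoly

variable {σ : Type*}

lemma tp_sum' {α : Type*} (s : Finset α) (f : α → MvPolynomial σ ℝ)
    (h : ∀ a ∈ s, ∀ m, 0 ≤ (f a).coeff m) : ∀ m, 0 ≤ (∑ a ∈ s, f a).coeff m := by
  intro m
  rw [MvPolynomial.coeff_sum]
  exact Finset.sum_nonneg fun a ha => h a ha m

lemma tp_mul' (f g : MvPolynomial σ ℝ) (hf : ∀ m, 0 ≤ f.coeff m) (hg : ∀ m, 0 ≤ g.coeff m) :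
    ∀ m, 0 ≤ (f * g).coeff m := by
  intro m
  rw [MvPolynomial.coeff_mul]
  exact Finset.sum_nonneg fun x _ => mul_nonneg (hf _) (hg _)

lemma tp_prodX (P : Finset σ) : ∀ m, 0 ≤ (∏ e ∈ P, (X e : MvPolynomial σ ℝ)).coeff m := by
  induction P using Finset.induction with
  | empty =>
      intro m
      simp only [Finset.prod_empty]
      rw [show (1 : MvPolynomial σ ℝ) = C 1 by simp, MvPolynomial.coeff_C]
      positivity
  | insert _ _ hx ih =>
      rename_i x P'
      rw [Finset.prod_insert hx]
      refine tp_mul' _ _ ?_ ih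
      intro m
      rw [MvPolynomial.coeff_X']
      positivity

lemma weight_sum (q : ℝ) (s : Finset σ) :
    ∑ S ∈ s.powerset, q ^ S.card * (1 - q) ^ (s.card - S.card) = 1 := by
  have h := Finset.prod_add (fun _ : σ => q) (fun _ => 1 - q) s
  simp only [Finset.prod_const] at h
  have h2 : ∀ S ∈ s.powerset, q ^ S.card * (1 - q) ^ (s \ S).card
      = q ^ S.card * (1 - q) ^ (s.card - S.card) := by
    intro S hS
    rw [Finset.card_sdiff_of_subset (Finset.mem_powerset.1 hS)]
  rw [Finset.sum_congr rfl h2] at h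
  have h3 : q + (1 - q) = 1 := by ring
  rw [h3, one_pow] at h
  exact h.symm

lemma pderiv_prodX [DecidableEq σ] (j : σ) (P : Finset σ) :
    pderiv j (∏ e ∈ P, (X e : MvPolynomial σ ℝ))
      = if j ∈ P then ∏ e ∈ P.erase j, (X e : MvPolynomial σ ℝ) else 0 := by
  induction P using Finset.induction with
  | empty => simp [pderiv_one]
  | insert _ _ hx ih =>
      rename_i x P'
      rw [Finset.prod_insert hx, pderiv_mul, ih]
      by_cases hjx : j = x
      · subst hjx
        rw [pderiv_X_self, if_neg hx, if_pos (Finset.mem_insert_self j P'),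
          Finset.erase_insert hx]
        simp
      · rw [pderiv_X_of_ne (Ne.symm hjx), zero_mul, zero_add]
        by_cases hjP : j ∈ P'
        · rw [if_pos hjP, if_pos (Finset.mem_insert_of_mem hjP),
            Finset.erase_insert_of_ne (Ne.symm hjx)]
          rw [Finset.prod_insert (fun h => hx (Finset.mem_of_mem_erase h))]
        · rw [if_neg hjP, mul_zero, if_neg]
          intro h
          rcases Finset.mem_insert.1 h with h | h
          · exact hjx h
          · exact hjP h

lemma prodX_totalDegree (P : Finset σ) :
    (∏ e ∈ P, (X e : MvPolynomial σ ℝ)).totalDegree ≤ P.card := by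
  refine le_trans (totalDegree_finset_prod _ _) ?_
  simp [MvPolynomial.totalDegree_X]

lemma pderiv_totalDegree {i : σ} {g : MvPolynomial σ ℝ} {n : ℕ}
    (h : g.totalDegree ≤ n + 1) : (pderiv i g).totalDegree ≤ n := by
  conv_lhs => rw [g.as_sum]
  rw [map_sum]
  refine le_trans (totalDegree_finset_sum _ _) (Finset.sup_le fun m hm => ?_)
  rw [pderiv_monomial]
  by_cases hmi : m i = 0
  · simp [hmi]
  · refine le_trans (totalDegree_monomial_le _ _) ?_
    have hm' : m.sum (fun _ k => k) ≤ n + 1 :=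
      le_trans (MvPolynomial.le_totalDegree hm) h
    have hle : Finsupp.single i 1 ≤ m := by
      rw [Finsupp.single_le_iff]; omega
    have hdec : (m - Finsupp.single i 1) + Finsupp.single i 1 = m :=
      tsub_add_cancel_of_le hle
    have hsum : (m - Finsupp.single i 1).sum (fun _ k => k) + 1 = m.sum (fun _ k => k) := by
      conv_rhs => rw [← hdec]
      rw [Finsupp.sum_add_index' (fun _ => rfl) (fun _ _ _ => rfl),
        Finsupp.sum_single_index rfl]
    have hid : (m - Finsupp.single i 1).sum (fun _ => id)
        = (m - Finsupp.single i 1).sum (fun _ k => k) := rfl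
    rw [hid]
    omega

lemma pderiv_of_deg_zero {i : σ} {g : MvPolynomial σ ℝ} (h : g.totalDegree = 0) :
    pderiv i g = 0 := by
  conv_lhs => rw [g.as_sum]
  rw [map_sum]
  refine Finset.sum_eq_zero fun m hm => ?_
  rw [pderiv_monomial, (totalDegree_eq_zero_iff σ g).1 h m hm i, Nat.cast_zero, mul_zero,
    map_zero]

lemma iterate_pderiv_zero (i : σ) (k : ℕ) :
    (fun h => pderiv i h)^[k] (0 : MvPolynomial σ ℝ) = 0 := by
  induction k with
  | zero => rfl
  | succ k ih => rw [Function.iterate_succ_apply, map_zero, ih]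

lemma iterate_pderiv_bound (i : σ) (k : ℕ) :
    ∀ (n : ℕ) (g : MvPolynomial σ ℝ), g.totalDegree ≤ n →
      ((fun h => pderiv i h)^[k] g).totalDegree ≤ n - k ∧
      (n < k → (fun h => pderiv i h)^[k] g = 0) := by
  induction k with
  | zero => intro n g h; exact ⟨by simpa using h, by omega⟩
  | succ k ih =>
      intro n g h
      rw [Function.iterate_succ_apply]
      match n with
      | 0 =>
          have h0 : pderiv i g = 0 := pderiv_of_deg_zero (Nat.le_zero.1 h)
          rw [h0, iterate_pderiv_zero]
          exact ⟨by simp, fun _ => rfl⟩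
      | n + 1 =>
          have h1 : (pderiv i g).totalDegree ≤ n := pderiv_totalDegree h
          obtain ⟨ha, hb⟩ := ih n (pderiv i g) h1
          exact ⟨by simpa [Nat.succ_sub_succ] using ha, fun hlt => hb (by omega)⟩

variable [Fintype σ]

lemma struct_one (a : σ →₀ ℕ) (h : ∑ e, a e = 1) : ∃ i, a = Finsupp.single i 1 := by
  obtain ⟨i, -, hi⟩ := Finset.exists_ne_zero_of_sum_ne_zero (s := Finset.univ) (f := (a : σ → ℕ))
    (by rw [h]; exact one_ne_zero)
  have hle : a i ≤ 1 := h ▸ Finset.single_le_sum (fun e _ => Nat.zero_le _) (Finset.mem_univ i)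
  have hai : a i = 1 := by omega
  have hrest : ∑ e ∈ Finset.univ.erase i, a e = 0 := by
    have := Finset.add_sum_erase Finset.univ (⇑a) (Finset.mem_univ i)
    omega
  refine ⟨i, Finsupp.ext fun k => ?_⟩
  rcases eq_or_ne k i with rfl | hk
  · rw [hai, Finsupp.single_eq_same]
  · rw [Finsupp.single_eq_of_ne' (Ne.symm hk)]
    exact Finset.sum_eq_zero_iff.1 hrest k (Finset.mem_erase.2 ⟨hk, Finset.mem_univ k⟩)

lemma struct_two (a : σ →₀ ℕ) (h : ∑ e, a e = 2) :
    (∃ i, a = Finsupp.single i 2) ∨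
    (∃ i j, i ≠ j ∧ a = Finsupp.single i 1 + Finsupp.single j 1) := by
  obtain ⟨i, -, hi⟩ := Finset.exists_ne_zero_of_sum_ne_zero (s := Finset.univ) (f := (a : σ → ℕ))
    (by rw [h]; exact two_ne_zero)
  have hle : a i ≤ 2 := h ▸ Finset.single_le_sum (fun e _ => Nat.zero_le _) (Finset.mem_univ i)
  have hsplit := Finset.add_sum_erase Finset.univ (⇑a) (Finset.mem_univ i)
  rcases (by omega : a i = 2 ∨ a i = 1) with hai | hai
  · left
    have hrest : ∑ e ∈ Finset.univ.erase i, a e = 0 := by omega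
    refine ⟨i, Finsupp.ext fun k => ?_⟩
    rcases eq_or_ne k i with rfl | hk
    · rw [hai, Finsupp.single_eq_same]
    · rw [Finsupp.single_eq_of_ne' (Ne.symm hk)]
      exact Finset.sum_eq_zero_iff.1 hrest k (Finset.mem_erase.2 ⟨hk, Finset.mem_univ k⟩)
  · right
    have hrest : ∑ e ∈ Finset.univ.erase i, a e = 1 := by omega
    obtain ⟨j, hjmem, hj⟩ := Finset.exists_ne_zero_of_sum_ne_zero (f := (a : σ → ℕ))
      (by rw [hrest]; exact one_ne_zero)
    have hji : j ≠ i := (Finset.mem_erase.1 hjmem).1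
    have hlej : a j ≤ 1 := hrest ▸ Finset.single_le_sum (fun e _ => Nat.zero_le _) hjmem
    have haj : a j = 1 := by omega
    have hsplit2 := Finset.add_sum_erase (Finset.univ.erase i) (⇑a) hjmem
    have hrest2 : ∑ e ∈ (Finset.univ.erase i).erase j, a e = 0 := by omega
    refine ⟨i, j, Ne.symm hji, Finsupp.ext fun k => ?_⟩
    rcases eq_or_ne k i with rfl | hki
    · rw [Finsupp.add_apply, Finsupp.single_eq_same, Finsupp.single_eq_of_ne' hji, hai]
      omega
    rcases eq_or_ne k j with rfl | hkj
    · rw [Finsupp.add_apply, Finsupp.single_eq_same, Finsupp.single_eq_of_ne' (Ne.symm hji), haj]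
    · rw [Finsupp.add_apply, Finsupp.single_eq_of_ne' (Ne.symm hki),
        Finsupp.single_eq_of_ne' (Ne.symm hkj)]
      exact Finset.sum_eq_zero_iff.1 hrest2 k
        (Finset.mem_erase.2 ⟨hkj, Finset.mem_erase.2 ⟨hki, Finset.mem_univ k⟩⟩)

end GenericPoly

section BernLemmas

variable {V : Type*} [Fintype V]

lemma bern_sum {α : Type*} (q : ℝ) (s : Finset α) (f : α → MvPolynomial (Sym2 V) ℝ) :
    bernoulliExp q (∑ a ∈ s, f a) = ∑ a ∈ s, bernoulliExp q (f a) := by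
  unfold bernoulliExp
  rw [Finset.sum_comm]
  refine Finset.sum_congr rfl fun S _ => ?_
  rw [map_sum, Finset.mul_sum]

lemma bern_C (q : ℝ) (c : ℝ) : bernoulliExp q (C c : MvPolynomial (Sym2 V) ℝ) = c := by
  unfold bernoulliExp
  simp only [eval_C]
  rw [← Finset.sum_mul]
  rw [show (Fintype.card (Sym2 V)) = (Finset.univ : Finset (Sym2 V)).card from
    (Finset.card_univ).symm]
  rw [weight_sum, one_mul]

lemma bern_zero (q : ℝ) : bernoulliExp q (0 : MvPolynomial (Sym2 V) ℝ) = 0 := by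
  have := bern_C (V := V) q 0
  rwa [map_zero] at this

lemma bern_one (q : ℝ) : bernoulliExp q (1 : MvPolynomial (Sym2 V) ℝ) = 1 := by
  have := bern_C (V := V) q 1
  rwa [map_one] at this

lemma bern_X (q : ℝ) (e : Sym2 V) : bernoulliExp q (X e : MvPolynomial (Sym2 V) ℝ) = q := by
  unfold bernoulliExp
  simp only [eval_X]
  have huniv : (Finset.univ : Finset (Sym2 V)) = insert e (Finset.univ.erase e) := by
    rw [Finset.insert_erase (Finset.mem_univ e)]
  have hcard : Fintype.card (Sym2 V) = (Finset.univ.erase e).card + 1 := by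
    rw [Finset.card_erase_of_mem (Finset.mem_univ e), ← Finset.card_univ]
    have : 0 < (Finset.univ : Finset (Sym2 V)).card := Finset.card_pos.2 ⟨e, Finset.mem_univ e⟩
    omega
  rw [huniv, Finset.sum_powerset_insert (Finset.notMem_erase e _)]
  have h1 : ∀ t ∈ (Finset.univ.erase e).powerset,
      q ^ t.card * (1 - q) ^ (Fintype.card (Sym2 V) - t.card) * (if e ∈ t then (1:ℝ) else 0)
        = 0 := by
    intro t ht
    have : e ∉ t := fun h => Finset.notMem_erase e _ (Finset.mem_powerset.1 ht h)
    simp [this]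
  rw [Finset.sum_congr rfl h1, Finset.sum_const, smul_zero, zero_add]
  have h2 : ∀ t ∈ (Finset.univ.erase e).powerset,
      q ^ (insert e t).card * (1 - q) ^ (Fintype.card (Sym2 V) - (insert e t).card) *
        (if e ∈ insert e t then (1:ℝ) else 0)
      = q * (q ^ t.card * (1 - q) ^ ((Finset.univ.erase e).card - t.card)) := by
    intro t ht
    have het : e ∉ t := fun h => Finset.notMem_erase e _ (Finset.mem_powerset.1 ht h)
    have hc : (insert e t).card = t.card + 1 := Finset.card_insert_of_notMem het
    have htc : t.card ≤ (Finset.univ.erase e).card :=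
      Finset.card_le_card (Finset.mem_powerset.1 ht)
    rw [hc, if_pos (Finset.mem_insert_self e t), hcard]
    have h3 : (Finset.univ.erase e).card + 1 - (t.card + 1)
        = (Finset.univ.erase e).card - t.card := by omega
    rw [h3]
    ring
  rw [Finset.sum_congr rfl h2, ← Finset.mul_sum, weight_sum, mul_one]

end BernLemmas

section IterDerivLemmas

variable {V : Type*}

lemma foldr_kill (a : Sym2 V →₀ ℕ) (l : List (Sym2 V)) (g : MvPolynomial (Sym2 V) ℝ)
    (n : ℕ) (h : g.totalDegree ≤ n) :
    (l.foldr (fun i g => (fun h => MvPolynomial.pderiv i h)^[a i] g) g).totalDegree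
        ≤ n - (l.map a).sum ∧
      (n < (l.map a).sum →
        l.foldr (fun i g => (fun h => MvPolynomial.pderiv i h)^[a i] g) g = 0) := by
  induction l with
  | nil => exact ⟨by simpa using h, by simp⟩
  | cons i l' ih =>
      obtain ⟨ha, hb⟩ := ih
      simp only [List.foldr_cons, List.map_cons, List.sum_cons]
      by_cases hc : n < (l'.map a).sum
      · rw [hb hc, iterate_pderiv_zero]
        exact ⟨by simp, fun _ => rfl⟩
      · push_neg at hc
        obtain ⟨h1, h2⟩ := iterate_pderiv_bound i (a i) (n - (l'.map a).sum) _ ha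
        constructor
        · refine le_trans h1 ?_
          omega
        · intro hlt
          exact h2 (by omega)

lemma sum_univ_eq_support_sum [Fintype V] (a : Sym2 V →₀ ℕ) :
    ∑ e, a e = ∑ e ∈ a.support, a e := by
  refine (Finset.sum_subset (Finset.subset_univ _) ?_).symm
  intro x _ hx
  exact Finsupp.notMem_support_iff.1 hx

lemma iterDeriv_zero_of_big [Fintype V] (a : Sym2 V →₀ ℕ) (f : MvPolynomial (Sym2 V) ℝ)
    (hf : f.totalDegree ≤ 2) (ha : 3 ≤ ∑ e, a e) : iterDeriv a f = 0 := by
  have hsum : (a.support.toList.map a).sum = ∑ e, a e := by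
    rw [sum_univ_eq_support_sum]
    exact Finset.sum_map_toList _ _
  exact (foldr_kill a a.support.toList f 2 hf).2 (by omega)

lemma iterDeriv_single_one (i : Sym2 V) (f : MvPolynomial (Sym2 V) ℝ) :
    iterDeriv (Finsupp.single i 1) f = pderiv i f := by
  unfold iterDeriv
  rw [Finsupp.support_single_ne_zero i one_ne_zero, Finset.toList_singleton]
  simp [Finsupp.single_eq_same]

lemma iterDeriv_single_two (i : Sym2 V) (f : MvPolynomial (Sym2 V) ℝ) :
    iterDeriv (Finsupp.single i 2) f = pderiv i (pderiv i f) := by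
  unfold iterDeriv
  rw [Finsupp.support_single_ne_zero i two_ne_zero, Finset.toList_singleton]
  simp [Finsupp.single_eq_same, Function.iterate_succ_apply]

lemma iterDeriv_pair {i j : Sym2 V} (hij : i ≠ j) (f : MvPolynomial (Sym2 V) ℝ) :
    iterDeriv (Finsupp.single i 1 + Finsupp.single j 1) f = pderiv i (pderiv j f) ∨
    iterDeriv (Finsupp.single i 1 + Finsupp.single j 1) f = pderiv j (pderiv i f) := by
  set a := Finsupp.single i 1 + Finsupp.single j 1 with ha
  have hai : a i = 1 := by simp [ha, Finsupp.single_eq_same, Finsupp.single_eq_of_ne' hij.symm]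
  have haj : a j = 1 := by simp [ha, Finsupp.single_eq_same, Finsupp.single_eq_of_ne' hij]
  have hsupp : a.support = {i, j} := by
    ext k
    simp only [Finsupp.mem_support_iff, ha, Finsupp.add_apply, Finset.mem_insert,
      Finset.mem_singleton]
    rcases eq_or_ne k i with rfl | hki
    · simp [Finsupp.single_eq_same]
    rcases eq_or_ne k j with rfl | hkj
    · simp [Finsupp.single_eq_same]
    · simp [Finsupp.single_eq_of_ne' (Ne.symm hki), Finsupp.single_eq_of_ne' (Ne.symm hkj),
        hki, hkj]
  have hnd : a.support.toList.Nodup := Finset.nodup_toList _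
  have hlen : a.support.toList.length = 2 := by
    rw [Finset.length_toList, hsupp, Finset.card_insert_of_notMem (by simpa using hij),
      Finset.card_singleton]
  have hmem : ∀ x ∈ a.support.toList, x = i ∨ x = j := by
    intro x hx
    have := Finset.mem_toList.1 hx
    rw [hsupp] at this
    simpa using this
  unfold iterDeriv
  match hl : a.support.toList, hlen with
  | [x, y], _ =>
    rw [hl] at hnd hmem
    have hx := hmem x (by simp)
    have hy := hmem y (by simp)
    have hxy : x ≠ y := by
      intro h; rw [h] at hnd; simp at hnd
    simp only [List.foldr_cons, List.foldr_nil]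
    rcases hx with rfl | rfl
    · rcases hy with rfl | rfl
      · exact absurd rfl hxy
      · left; rw [hai, haj]; simp [Function.iterate_one]
    · rcases hy with rfl | rfl
      · right; rw [hai, haj]; simp [Function.iterate_one]
      · exact absurd rfl hxy

end IterDerivLemmas

section Combinatorics

variable {V : Type*}

lemma triple_eq_of_pair {x y : Sym2 V} (hx : ¬x.IsDiag) (hy : ¬y.IsDiag) (hxy : x ≠ y)
    {s₁ s₂ : Finset V} (h1 : s₁.card = 3) (h2 : s₂.card = 3)
    (hx1 : ∀ v ∈ x, v ∈ s₁) (hy1 : ∀ v ∈ y, v ∈ s₁)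
    (hx2 : ∀ v ∈ x, v ∈ s₂) (hy2 : ∀ v ∈ y, v ∈ s₂) : s₁ = s₂ := by
  revert hx hxy hx1 hx2
  induction x using Sym2.ind with
  | _ a b =>
    revert hy hy1 hy2
    induction y using Sym2.ind with
    | _ c d =>
      intro hy hy1 hy2 hx hxy hx1 hx2
      have hab : a ≠ b := fun h => hx (Sym2.mk_isDiag_iff.2 h)
      have hcd : c ≠ d := fun h => hy (Sym2.mk_isDiag_iff.2 h)
      set T : Finset V := {a, b, c, d} with hT
      have hTs1 : T ⊆ s₁ := by
        intro v hv
        simp only [hT, Finset.mem_insert, Finset.mem_singleton] at hv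
        rcases hv with rfl | rfl | rfl | rfl
        · exact hx1 _ (Sym2.mem_iff.2 (Or.inl rfl))
        · exact hx1 _ (Sym2.mem_iff.2 (Or.inr rfl))
        · exact hy1 _ (Sym2.mem_iff.2 (Or.inl rfl))
        · exact hy1 _ (Sym2.mem_iff.2 (Or.inr rfl))
      have hTs2 : T ⊆ s₂ := by
        intro v hv
        simp only [hT, Finset.mem_insert, Finset.mem_singleton] at hv
        rcases hv with rfl | rfl | rfl | rfl
        · exact hx2 _ (Sym2.mem_iff.2 (Or.inl rfl))
        · exact hx2 _ (Sym2.mem_iff.2 (Or.inr rfl))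
        · exact hy2 _ (Sym2.mem_iff.2 (Or.inl rfl))
        · exact hy2 _ (Sym2.mem_iff.2 (Or.inr rfl))
      have habT : ({a, b} : Finset V) ⊆ T := by
        intro v hv
        simp only [Finset.mem_insert, Finset.mem_singleton] at hv
        rcases hv with rfl | rfl <;> simp [hT]
      have hcdT : ({c, d} : Finset V) ⊆ T := by
        intro v hv
        simp only [Finset.mem_insert, Finset.mem_singleton] at hv
        rcases hv with rfl | rfl <;> simp [hT]
      have hcardab : ({a, b} : Finset V).card = 2 := by
        rw [Finset.card_insert_of_notMem (by simpa using hab), Finset.card_singleton]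
      have hcardcd : ({c, d} : Finset V).card = 2 := by
        rw [Finset.card_insert_of_notMem (by simpa using hcd), Finset.card_singleton]
      have hTcard : 3 ≤ T.card := by
        by_contra hcon
        push_neg at hcon
        have he1 : ({a, b} : Finset V) = T :=
          Finset.eq_of_subset_of_card_le habT (by omega)
        have he2 : ({c, d} : Finset V) = T :=
          Finset.eq_of_subset_of_card_le hcdT (by omega)
        have heq : ({a, b} : Finset V) = {c, d} := he1.trans he2.symm
        have hc : c = a ∨ c = b := by
          have : c ∈ ({a, b} : Finset V) := heq ▸ (by simp)
          simpa using this
        have hd : d = a ∨ d = b := by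
          have : d ∈ ({a, b} : Finset V) := heq ▸ (by simp)
          simpa using this
        apply hxy
        rcases hc with rfl | rfl
        · rcases hd with rfl | rfl
          · exact absurd rfl hcd
          · rfl
        · rcases hd with rfl | rfl
          · exact Sym2.eq_swap
          · exact absurd rfl hcd
      have hint : 3 ≤ (s₁ ∩ s₂).card :=
        le_trans hTcard (Finset.card_le_card (Finset.subset_inter hTs1 hTs2))
      have e1 : s₁ ∩ s₂ = s₁ :=
        Finset.eq_of_subset_of_card_le Finset.inter_subset_left (by omega)
      have e2 : s₁ ∩ s₂ = s₂ :=
        Finset.eq_of_subset_of_card_le Finset.inter_subset_right (by omega)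
      rw [← e1, e2]

lemma pair_count {E : Finset (Sym2 V)} (hE : E.card = 3) (j : Sym2 V) :
    ((E.powersetCard 2).filter (fun pr => j ∈ pr)).card = if j ∈ E then 2 else 0 := by
  by_cases hj : j ∈ E
  · rw [if_pos hj]
    have hbij : ((E.powersetCard 2).filter (fun pr => j ∈ pr)).card
        = ((E.erase j).powersetCard 1).card := by
      refine Finset.card_bij' (fun pr _ => pr.erase j) (fun t _ => insert j t) ?_ ?_ ?_ ?_
      · intro pr hpr
        obtain ⟨hpr1, hpr2⟩ := Finset.mem_filter.1 hpr
        obtain ⟨hsub, hcard⟩ := Finset.mem_powersetCard.1 hpr1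
        refine Finset.mem_powersetCard.2 ⟨fun v hv => ?_, ?_⟩
        · exact Finset.mem_erase.2
            ⟨(Finset.mem_erase.1 hv).1, hsub (Finset.mem_of_mem_erase hv)⟩
        · rw [Finset.card_erase_of_mem hpr2, hcard]
      · intro t ht
        obtain ⟨hsub, hcard⟩ := Finset.mem_powersetCard.1 ht
        have hjt : j ∉ t := fun h => Finset.notMem_erase j E (hsub h)
        refine Finset.mem_filter.2
          ⟨Finset.mem_powersetCard.2 ⟨?_, ?_⟩, Finset.mem_insert_self j t⟩
        · intro v hv
          rcases Finset.mem_insert.1 hv with rfl | hv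
          · exact hj
          · exact Finset.mem_of_mem_erase (hsub hv)
        · rw [Finset.card_insert_of_notMem hjt, hcard]
      · intro pr hpr
        exact Finset.insert_erase (Finset.mem_filter.1 hpr).2
      · intro t ht
        have hjt : j ∉ t := fun h =>
          Finset.notMem_erase j E ((Finset.mem_powersetCard.1 ht).1 h)
        exact Finset.erase_insert hjt
    rw [hbij, Finset.card_powersetCard, Finset.card_erase_of_mem hj, hE]
    rfl
  · rw [if_neg hj, Finset.card_eq_zero, Finset.filter_eq_empty_iff]
    intro pr hpr hjpr
    exact hj ((Finset.mem_powersetCard.1 hpr).1 hjpr)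

end Combinatorics
section GraphSpecific

variable {V : Type*} [Fintype V] (G : SimpleGraph V)

lemma mem_triplesWith {k : ℕ} {s : Finset V} (hs : s ∈ triplesWith G k) :
    s.card = 3 ∧ (edgesIn G.edgeFinset s).card = k := by
  obtain ⟨h1, h2⟩ := Finset.mem_filter.1 hs
  exact ⟨(Finset.mem_powersetCard.1 h1).2, h2⟩

lemma mem_edgesIn {e : Sym2 V} {F : Finset (Sym2 V)} {s : Finset V} :
    e ∈ edgesIn F s ↔ e ∈ F ∧ ∀ x ∈ e, x ∈ s := by
  simp [edgesIn, Finset.mem_filter]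

lemma nondiag_of_mem {e : Sym2 V} (he : e ∈ G.edgeFinset) : ¬e.IsDiag :=
  G.not_isDiag_of_mem_edgeSet (SimpleGraph.mem_edgeFinset.1 he)

lemma count_le_one (k : ℕ) {x y : Sym2 V} (hxy : x ≠ y) :
    ((triplesWith G k).filter
      (fun s => x ∈ edgesIn G.edgeFinset s ∧ y ∈ edgesIn G.edgeFinset s)).card ≤ 1 := by
  rw [Finset.card_le_one]
  intro s₁ hs₁ s₂ hs₂
  obtain ⟨hm₁, hx₁, hy₁⟩ := Finset.mem_filter.1 hs₁
  obtain ⟨hm₂, hx₂, hy₂⟩ := Finset.mem_filter.1 hs₂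
  obtain ⟨hx₁e, hx₁s⟩ := mem_edgesIn.1 hx₁
  obtain ⟨hy₁e, hy₁s⟩ := mem_edgesIn.1 hy₁
  obtain ⟨-, hx₂s⟩ := mem_edgesIn.1 hx₂
  obtain ⟨-, hy₂s⟩ := mem_edgesIn.1 hy₂
  exact triple_eq_of_pair (nondiag_of_mem G hx₁e) (nondiag_of_mem G hy₁e) hxy
    (mem_triplesWith G hm₁).1 (mem_triplesWith G hm₂).1 hx₁s hy₁s hx₂s hy₂s

lemma D2_deg : (D2poly G).totalDegree ≤ 2 := by
  refine le_trans (totalDegree_finset_sum _ _) (Finset.sup_le fun s hs => ?_)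
  refine le_trans (prodX_totalDegree _) ?_
  rw [(mem_triplesWith G hs).2]

lemma T2_deg : (T2poly G).totalDegree ≤ 2 := by
  refine le_trans (totalDegree_finset_sum _ _) (Finset.sup_le fun s hs => ?_)
  refine le_trans (totalDegree_finset_sum _ _) (Finset.sup_le fun pr hpr => ?_)
  refine le_trans (prodX_totalDegree _) ?_
  rw [(Finset.mem_powersetCard.1 hpr).2]

lemma pderiv_D2 (j : Sym2 V) :
    pderiv j (D2poly G) = ∑ s ∈ triplesWith G 2,
      if j ∈ edgesIn G.edgeFinset s
        then ∏ e ∈ (edgesIn G.edgeFinset s).erase j, (X e : MvPolynomial (Sym2 V) ℝ)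
        else 0 := by
  unfold D2poly
  rw [map_sum]
  exact Finset.sum_congr rfl fun s _ => pderiv_prodX j _

lemma pderiv_T2 (j : Sym2 V) :
    pderiv j (T2poly G) = ∑ s ∈ triplesWith G 3,
      ∑ pr ∈ (edgesIn G.edgeFinset s).powersetCard 2,
        if j ∈ pr then ∏ e ∈ pr.erase j, (X e : MvPolynomial (Sym2 V) ℝ) else 0 := by
  unfold T2poly
  rw [map_sum]
  refine Finset.sum_congr rfl fun s _ => ?_
  rw [map_sum]
  exact Finset.sum_congr rfl fun pr _ => pderiv_prodX j _

lemma bern_D2_first (q : ℝ) (j : Sym2 V) :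
    bernoulliExp q (pderiv j (D2poly G)) = q * betaE G j := by
  rw [pderiv_D2, bern_sum]
  have h1 : ∀ s ∈ triplesWith G 2,
      bernoulliExp q (if j ∈ edgesIn G.edgeFinset s
        then ∏ e ∈ (edgesIn G.edgeFinset s).erase j, (X e : MvPolynomial (Sym2 V) ℝ)
        else 0) = if j ∈ edgesIn G.edgeFinset s then q else 0 := by
    intro s hs
    split_ifs with h
    · have hc : ((edgesIn G.edgeFinset s).erase j).card = 1 := by
        rw [Finset.card_erase_of_mem h, (mem_triplesWith G hs).2]
      obtain ⟨k, hk⟩ := Finset.card_eq_one.1 hc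
      rw [hk, Finset.prod_singleton, bern_X]
    · exact bern_zero q
  rw [Finset.sum_congr rfl h1]
  have h2 : ∀ s ∈ triplesWith G 2,
      (if j ∈ edgesIn G.edgeFinset s then q else 0)
        = q * (if j ∈ edgesIn G.edgeFinset s then (1:ℝ) else 0) := by
    intro s _; split_ifs <;> ring
  rw [Finset.sum_congr rfl h2, ← Finset.mul_sum, Finset.sum_boole]
  congr 2
  unfold betaE triplesWith
  congr 1
  ext s
  simp only [Finset.mem_filter]
  tauto

lemma D2_second_same (x : Sym2 V) : pderiv x (pderiv x (D2poly G)) = 0 := by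
  rw [pderiv_D2, map_sum]
  refine Finset.sum_eq_zero fun s _ => ?_
  rw [apply_ite (pderiv x), map_zero, pderiv_prodX, if_neg (Finset.notMem_erase x _)]
  exact ite_self 0

lemma T2_second_same (x : Sym2 V) : pderiv x (pderiv x (T2poly G)) = 0 := by
  rw [pderiv_T2, map_sum]
  refine Finset.sum_eq_zero fun s _ => ?_
  rw [map_sum]
  refine Finset.sum_eq_zero fun pr _ => ?_
  rw [apply_ite (pderiv x), map_zero, pderiv_prodX, if_neg (Finset.notMem_erase x _)]
  exact ite_self 0

lemma D2_second_le_one (q : ℝ) {x y : Sym2 V} (hxy : x ≠ y) :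
    bernoulliExp q (pderiv x (pderiv y (D2poly G))) ≤ 1 := by
  rw [pderiv_D2, map_sum, bern_sum]
  have h1 : ∀ s ∈ triplesWith G 2,
      bernoulliExp q (pderiv x (if y ∈ edgesIn G.edgeFinset s
        then ∏ e ∈ (edgesIn G.edgeFinset s).erase y, (X e : MvPolynomial (Sym2 V) ℝ)
        else 0))
      = if y ∈ edgesIn G.edgeFinset s ∧ x ∈ (edgesIn G.edgeFinset s).erase y
          then (1:ℝ) else 0 := by
    intro s hs
    rw [apply_ite (pderiv x), map_zero, pderiv_prodX]
    by_cases hY : y ∈ edgesIn G.edgeFinset s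
    · rw [if_pos hY]
      by_cases hX : x ∈ (edgesIn G.edgeFinset s).erase y
      · rw [if_pos hX, if_pos ⟨hY, hX⟩]
        have hc : (((edgesIn G.edgeFinset s).erase y).erase x).card = 0 := by
          rw [Finset.card_erase_of_mem hX, Finset.card_erase_of_mem hY,
            (mem_triplesWith G hs).2]
        rw [Finset.card_eq_zero.1 hc, Finset.prod_empty, bern_one]
      · rw [if_neg hX, if_neg (fun h => hX h.2), bern_zero]
    · rw [if_neg hY, if_neg (fun h => hY h.1), bern_zero]
  rw [Finset.sum_congr rfl h1, Finset.sum_boole]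
  have hsub : (triplesWith G 2).filter
        (fun s => y ∈ edgesIn G.edgeFinset s ∧ x ∈ (edgesIn G.edgeFinset s).erase y)
      ⊆ (triplesWith G 2).filter
        (fun s => x ∈ edgesIn G.edgeFinset s ∧ y ∈ edgesIn G.edgeFinset s) := by
    refine Finset.monotone_filter_right _ ?_
    intro s _ hs
    exact ⟨Finset.mem_of_mem_erase hs.2, hs.1⟩
  have := le_trans (Finset.card_le_card hsub) (count_le_one G 2 hxy)
  exact_mod_cast this

lemma T2_second_le_one (q : ℝ) {x y : Sym2 V} (hxy : x ≠ y) :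
    bernoulliExp q (pderiv x (pderiv y (T2poly G))) ≤ 1 := by
  rw [pderiv_T2, map_sum, bern_sum]
  have h1 : ∀ s ∈ triplesWith G 3,
      bernoulliExp q (pderiv x (∑ pr ∈ (edgesIn G.edgeFinset s).powersetCard 2,
        if y ∈ pr then ∏ e ∈ pr.erase y, (X e : MvPolynomial (Sym2 V) ℝ) else 0))
      ≤ if x ∈ edgesIn G.edgeFinset s ∧ y ∈ edgesIn G.edgeFinset s then (1:ℝ) else 0 := by
    intro s hs
    rw [map_sum, bern_sum]
    have h2 : ∀ pr ∈ (edgesIn G.edgeFinset s).powersetCard 2,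
        bernoulliExp q (pderiv x (if y ∈ pr
          then ∏ e ∈ pr.erase y, (X e : MvPolynomial (Sym2 V) ℝ) else 0))
        = if y ∈ pr ∧ x ∈ pr.erase y then (1:ℝ) else 0 := by
      intro pr hpr
      rw [apply_ite (pderiv x), map_zero, pderiv_prodX]
      by_cases hY : y ∈ pr
      · rw [if_pos hY]
        by_cases hX : x ∈ pr.erase y
        · rw [if_pos hX, if_pos ⟨hY, hX⟩]
          have hc : ((pr.erase y).erase x).card = 0 := by
            rw [Finset.card_erase_of_mem hX, Finset.card_erase_of_mem hY,
              (Finset.mem_powersetCard.1 hpr).2]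
          rw [Finset.card_eq_zero.1 hc, Finset.prod_empty, bern_one]
        · rw [if_neg hX, if_neg (fun h => hX h.2), bern_zero]
      · rw [if_neg hY, if_neg (fun h => hY h.1), bern_zero]
    rw [Finset.sum_congr rfl h2, Finset.sum_boole]
    by_cases hcond : x ∈ edgesIn G.edgeFinset s ∧ y ∈ edgesIn G.edgeFinset s
    · rw [if_pos hcond]
      have hss : ((edgesIn G.edgeFinset s).powersetCard 2).filter
            (fun pr => y ∈ pr ∧ x ∈ pr.erase y) ⊆ {({x, y} : Finset (Sym2 V))} := by
        intro pr hpr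
        obtain ⟨hpr1, hY, hX⟩ := Finset.mem_filter.1 hpr
        have hcard : pr.card = 2 := (Finset.mem_powersetCard.1 hpr1).2
        have hsub2 : ({x, y} : Finset (Sym2 V)) ⊆ pr := by
          intro v hv
          rcases Finset.mem_insert.1 hv with rfl | hv
          · exact Finset.mem_of_mem_erase hX
          · rwa [Finset.mem_singleton.1 hv]
        have hc2 : ({x, y} : Finset (Sym2 V)).card = 2 := by
          rw [Finset.card_insert_of_notMem (by simpa using hxy), Finset.card_singleton]
        have : ({x, y} : Finset (Sym2 V)) = pr :=
          Finset.eq_of_subset_of_card_le hsub2 (by omega)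
        rw [Finset.mem_singleton, ← this]
      have := le_trans (Finset.card_le_card hss) (by simp : ({({x, y} : Finset (Sym2 V))} : Finset (Finset (Sym2 V))).card ≤ 1)
      exact_mod_cast this
    · rw [if_neg hcond]
      have hempty : ((edgesIn G.edgeFinset s).powersetCard 2).filter
            (fun pr => y ∈ pr ∧ x ∈ pr.erase y) = ∅ := by
        rw [Finset.filter_eq_empty_iff]
        intro pr hpr ⟨hY, hX⟩
        have hsub := (Finset.mem_powersetCard.1 hpr).1
        exact hcond ⟨hsub (Finset.mem_of_mem_erase hX), hsub hY⟩
      rw [hempty]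
      simp
  refine le_trans (Finset.sum_le_sum h1) ?_
  rw [Finset.sum_boole]
  have := count_le_one G 3 hxy
  exact_mod_cast this

lemma bern_T2_first (q : ℝ) (j : Sym2 V) :
    bernoulliExp q (pderiv j (T2poly G)) = 2 * q * deltaE G j := by
  rw [pderiv_T2, bern_sum]
  have h1 : ∀ s ∈ triplesWith G 3,
      bernoulliExp q (∑ pr ∈ (edgesIn G.edgeFinset s).powersetCard 2,
        if j ∈ pr then ∏ e ∈ pr.erase j, (X e : MvPolynomial (Sym2 V) ℝ) else 0)
      = if j ∈ edgesIn G.edgeFinset s then 2 * q else 0 := by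
    intro s hs
    rw [bern_sum]
    have h2 : ∀ pr ∈ (edgesIn G.edgeFinset s).powersetCard 2,
        bernoulliExp q (if j ∈ pr
          then ∏ e ∈ pr.erase j, (X e : MvPolynomial (Sym2 V) ℝ) else 0)
        = if j ∈ pr then q else 0 := by
      intro pr hpr
      split_ifs with h
      · have hc : (pr.erase j).card = 1 := by
          rw [Finset.card_erase_of_mem h, (Finset.mem_powersetCard.1 hpr).2]
        obtain ⟨k, hk⟩ := Finset.card_eq_one.1 hc
        rw [hk, Finset.prod_singleton, bern_X]
      · exact bern_zero q
    rw [Finset.sum_congr rfl h2]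
    have h3 : ∀ pr ∈ (edgesIn G.edgeFinset s).powersetCard 2,
        (if j ∈ pr then q else 0) = q * (if j ∈ pr then (1:ℝ) else 0) := by
      intro pr _; split_ifs <;> ring
    rw [Finset.sum_congr rfl h3, ← Finset.mul_sum, Finset.sum_boole,
      pair_count (mem_triplesWith G hs).2 j]
    split_ifs with h
    · push_cast; ring
    · simp
  rw [Finset.sum_congr rfl h1]
  have h4 : ∀ s ∈ triplesWith G 3,
      (if j ∈ edgesIn G.edgeFinset s then 2 * q else 0)
        = (2 * q) * (if j ∈ edgesIn G.edgeFinset s then (1:ℝ) else 0) := by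
    intro s _; split_ifs <;> ring
  rw [Finset.sum_congr rfl h4, ← Finset.mul_sum, Finset.sum_boole]
  congr 2
  unfold deltaE triplesWith
  congr 1
  ext s
  simp only [Finset.mem_filter]
  tauto

lemma betaE_zero {j : Sym2 V} (hj : j ∉ G.edgeFinset) : betaE G j = 0 := by
  unfold betaE
  rw [Finset.card_eq_zero, Finset.filter_eq_empty_iff]
  intro s _ ⟨_, hmem⟩
  exact hj (mem_edgesIn.1 hmem).1

lemma deltaE_zero {j : Sym2 V} (hj : j ∉ G.edgeFinset) : deltaE G j = 0 := by
  unfold deltaE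
  rw [Finset.card_eq_zero, Finset.filter_eq_empty_iff]
  intro s _ ⟨_, hmem⟩
  exact hj (mem_edgesIn.1 hmem).1

end GraphSpecific
theorem D2_T2_totally_positive_and_bounded {V : Type*} [Fintype V] (G : SimpleGraph V)
    (hG : G.edgeFinset.Nonempty) (p : ℝ) (hp0 : 0 ≤ p) (hp1 : p ≤ 1)
    (β Δ : ℕ)
    (hβ : β = G.edgeFinset.sup (betaE G))
    (hΔ : Δ = G.edgeFinset.sup (deltaE G)) :
    TotallyPositive (D2poly G) ∧ TotallyPositive (T2poly G) ∧
    (∀ a : Sym2 V →₀ ℕ, 1 ≤ ∑ e, a e →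
      bernoulliExp p (iterDeriv a (D2poly G)) ≤ max (p * (β : ℝ)) 1) ∧
    (∀ a : Sym2 V →₀ ℕ, 1 ≤ ∑ e, a e →
      bernoulliExp p (iterDeriv a (T2poly G)) ≤ max (2 * p * (Δ : ℝ)) 1) := by
  subst hβ hΔ
  refine ⟨fun m => tp_sum' _ _ (fun s _ => tp_prodX _) m,
          fun m => tp_sum' _ _ (fun s _ => tp_sum' _ _ fun pr _ => tp_prodX _) m, ?_, ?_⟩
  · intro a ha
    have hd : ∑ e, a e = 1 ∨ ∑ e, a e = 2 ∨ 3 ≤ ∑ e, a e := by omega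
    rcases hd with h1 | h2 | h3
    · obtain ⟨i, rfl⟩ := struct_one a h1
      rw [iterDeriv_single_one, bern_D2_first]
      by_cases hi : i ∈ G.edgeFinset
      · refine le_trans ?_ (le_max_left _ _)
        exact mul_le_mul_of_nonneg_left (Nat.cast_le.2 (Finset.le_sup hi)) hp0
      · rw [betaE_zero G hi]
        norm_num
    · rcases struct_two a h2 with ⟨i, rfl⟩ | ⟨i, j, hij, rfl⟩
      · rw [iterDeriv_single_two, D2_second_same, bern_zero]
        exact le_max_of_le_right zero_le_one
      · rcases iterDeriv_pair hij (D2poly G) with h | h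
        · rw [h]; exact le_max_of_le_right (D2_second_le_one G p hij)
        · rw [h]; exact le_max_of_le_right (D2_second_le_one G p hij.symm)
    · rw [iterDeriv_zero_of_big a _ (D2_deg G) h3, bern_zero]
      exact le_max_of_le_right zero_le_one
  · intro a ha
    have hd : ∑ e, a e = 1 ∨ ∑ e, a e = 2 ∨ 3 ≤ ∑ e, a e := by omega
    rcases hd with h1 | h2 | h3
    · obtain ⟨i, rfl⟩ := struct_one a h1
      rw [iterDeriv_single_one, bern_T2_first]
      by_cases hi : i ∈ G.edgeFinset
      · refine le_trans ?_ (le_max_left _ _)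
        exact mul_le_mul_of_nonneg_left (Nat.cast_le.2 (Finset.le_sup hi))
          (by positivity)
      · rw [deltaE_zero G hi]
        norm_num
    · rcases struct_two a h2 with ⟨i, rfl⟩ | ⟨i, j, hij, rfl⟩
      · rw [iterDeriv_single_two, T2_second_same, bern_zero]
        exact le_max_of_le_right zero_le_one
      · rcases iterDeriv_pair hij (T2poly G) with h | h
        · rw [h]; exact le_max_of_le_right (T2_second_le_one G p hij)
        · rw [h]; exact le_max_of_le_right (T2_second_le_one G p hij.symm)
    · rw [iterDeriv_zero_of_big a _ (T2_deg G) h3, bern_zero]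
      exact le_max_of_le_right zero_le_one

end ThreeProfile
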